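/- Let T be a symmetric bilinear form and J, J̃ vectors on Minkowski space ℝ⁴ satisfying the local mass-charge inequality. Then for every future-directed causal vector Z, the vector T♯Z is future-directed causal. -/

import Mathlib

lemma revCS (a b c d x y z w : ℝ) (ha : a * a - b * b - c * c - d * d ≥ 0)
    (hx : x * x - y * y - z * z - w * w ≥ 0) (ha0 : a ≥ 0) (hx0 : x ≥ 0) :
    a * x - b * y - c * z - d * w ≥ 0 := by
  have hcs2 : (b * y + c * z + d * w) ^ 2 ≤ (b ^ 2 + c ^ 2 + d ^ 2) * (y ^ 2 + z ^ 2 + w ^ 2) := by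
    nlinarith [sq_nonneg (b * z - c * y), sq_nonneg (b * w - d * y), sq_nonneg (c * w - d * z)]
  have h1 : b ^ 2 + c ^ 2 + d ^ 2 ≤ a ^ 2 := by nlinarith
  have h2 : y ^ 2 + z ^ 2 + w ^ 2 ≤ x ^ 2 := by nlinarith
  have hq : (0:ℝ) ≤ a * x := mul_nonneg ha0 hx0
  have hp2 : (b * y + c * z + d * w) ^ 2 ≤ (a * x) ^ 2 := by
    calc (b * y + c * z + d * w) ^ 2
        ≤ (b ^ 2 + c ^ 2 + d ^ 2) * (y ^ 2 + z ^ 2 + w ^ 2) := hcs2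
      _ ≤ a ^ 2 * x ^ 2 := mul_le_mul h1 h2 (by positivity) (sq_nonneg _)
      _ = (a * x) ^ 2 := by ring
  nlinarith [sq_nonneg (a * x - (b * y + c * z + d * w))]

noncomputable def eta (x y : Fin 4 → ℝ) : ℝ :=
  x 0 * y 0 - x 1 * y 1 - x 2 * y 2 - x 3 * y 3

/-- If (T, J, J̃) satisfies the local mass-charge inequality then T♯Z is
future-directed causal for every future-directed causal Z. -/
theorem Tsharp_futureCausal_of_localMassCharge
    (T : LinearMap.BilinForm ℝ (Fin 4 → ℝ)) (hT : ∀ x y, T x y = T y x)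
    (J Jt : Fin 4 → ℝ)
    (Tsharp : (Fin 4 → ℝ) → (Fin 4 → ℝ))
    (hTs : ∀ x u, eta (Tsharp x) u = T x u)
    (hLMC : ∀ Z : Fin 4 → ℝ, eta Z Z ≥ 0 → Z 0 ≥ 0 →
        T Z Z ≥ 0 ∧ eta (Tsharp Z) (Tsharp Z) ≥ (eta J Z) ^ 2 + (eta Jt Z) ^ 2) :
    ∀ Z : Fin 4 → ℝ, eta Z Z ≥ 0 → Z 0 ≥ 0 →
        eta (Tsharp Z) (Tsharp Z) ≥ 0 ∧ (Tsharp Z) 0 ≥ 0 := by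
  intro Z hZ hZ0
  obtain ⟨hTZZ, hcs⟩ := hLMC Z hZ hZ0
  constructor
  · nlinarith [sq_nonneg (eta J Z), sq_nonneg (eta Jt Z)]
  · have he0 : eta ![1, 0, 0, 0] ![1, 0, 0, 0] ≥ 0 := by norm_num [eta, Matrix.cons_val_two, Matrix.cons_val_three, Matrix.vecHead, Matrix.vecTail]
    have he0' : (![1, 0, 0, 0] : Fin 4 → ℝ) 0 ≥ 0 := by norm_num
    obtain ⟨hne0, hnn⟩ := hLMC ![1, 0, 0, 0] he0 he0'
    have hn0 : Tsharp ![1, 0, 0, 0] 0 = T ![1, 0, 0, 0] ![1, 0, 0, 0] := by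
      have h := hTs ![1, 0, 0, 0] ![1, 0, 0, 0]
      simp only [eta] at h
      norm_num [Matrix.cons_val_two, Matrix.cons_val_three, Matrix.vecHead, Matrix.vecTail] at h
      linarith
    have hn0' : Tsharp ![1, 0, 0, 0] 0 ≥ 0 := by rw [hn0]; exact hne0
    have hm0 : (Tsharp Z) 0 = eta (Tsharp ![1, 0, 0, 0]) Z := by
      have h1 := hTs Z ![1, 0, 0, 0]
      have h2 := hTs ![1, 0, 0, 0] Z
      simp only [eta] at h1
      norm_num [Matrix.cons_val_two, Matrix.cons_val_three, Matrix.vecHead, Matrix.vecTail] at h1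
      rw [hT Z ![1, 0, 0, 0]] at h1
      rw [h1, ← h2]
    rw [hm0]
    have hnn' : eta (Tsharp ![1, 0, 0, 0]) (Tsharp ![1, 0, 0, 0]) ≥ 0 := by
      nlinarith [sq_nonneg (eta J ![1, 0, 0, 0]), sq_nonneg (eta Jt ![1, 0, 0, 0])]
    unfold eta at hnn' hZ ⊢
    exact revCS _ _ _ _ _ _ _ _ hnn' hZ hn0' hZ0
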